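/- For every even positive integer n, there exists a Latin square of order n that has no orthogonal mate. -/

import Mathlib

/-- A Latin square of order `n`: each symbol occurs exactly once in each row
and exactly once in each column. -/
def IsLatinSquare {n : ℕ} (A : Fin n → Fin n → Fin n) : Prop :=
  (∀ i, Function.Bijective fun j => A i j) ∧ (∀ j, Function.Bijective fun i => A i j)

/-- Two Latin squares are orthogonal: every ordered pair of symbols occurs
exactly once among the superimposed pairs. -/
def IsOrthogonal {n : ℕ} (A B : Fin n → Fin n → Fin n) : Prop :=
  ∀ p : Fin n × Fin n, ∃! q : Fin n × Fin n, (A q.1 q.2, B q.1 q.2) = p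

theorem no_orthogonal_mate_even (n : ℕ) (hn : 0 < n) (hev : Even n) :
    ∃ A : Fin n → Fin n → Fin n, IsLatinSquare A ∧
      ∀ B : Fin n → Fin n → Fin n, IsLatinSquare B → ¬ IsOrthogonal A B := by
  haveI : NeZero n := ⟨hn.ne'⟩
  refine ⟨fun i j => i + j, ⟨fun i => (Equiv.addLeft i).bijective,
    fun j => (Equiv.addRight j).bijective⟩, ?_⟩
  intro B hB hO
  -- for each symbol s, pick the unique cell where A = s and B = 0
  choose f hf _ using fun s : Fin n => hO (s, 0)
  have hfA : ∀ s, (f s).1 + (f s).2 = s := fun s => congrArg Prod.fst (hf s)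
  have hfB : ∀ s, B (f s).1 (f s).2 = 0 := fun s => congrArg Prod.snd (hf s)
  have hr : Function.Bijective fun s => (f s).1 := by
    refine (Finite.injective_iff_bijective).mp ?_
    intro s t h
    have h' : (f s).1 = (f t).1 := h
    have h2 : (f s).2 = (f t).2 := by
      apply (hB.1 (f s).1).injective
      show B (f s).1 (f s).2 = B (f s).1 (f t).2
      rw [hfB s, h']
      exact (hfB t).symm
    have hft : f s = f t := Prod.ext h h2
    rw [← hfA s, ← hfA t, hft]
  have hc : Function.Bijective fun s => (f s).2 := by
    refine (Finite.injective_iff_bijective).mp ?_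
    intro s t h
    have h' : (f s).2 = (f t).2 := h
    have h1 : (f s).1 = (f t).1 := by
      apply (hB.2 (f s).2).injective
      show B (f s).1 (f s).2 = B (f t).1 (f s).2
      rw [hfB s, h']
      exact (hfB t).symm
    have hft : f s = f t := Prod.ext h1 h
    rw [← hfA s, ← hfA t, hft]
  -- sum argument
  set S : Fin n := ∑ x : Fin n, x with hS
  have hsum : S = S + S := by
    calc S = ∑ s : Fin n, ((f s).1 + (f s).2) :=
            Fintype.sum_congr _ _ (fun s => (hfA s).symm)
      _ = (∑ s : Fin n, (f s).1) + ∑ s : Fin n, (f s).2 := Finset.sum_add_distrib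
      _ = S + S := by
            have h1 : (∑ s : Fin n, (f s).1) = ∑ x : Fin n, x :=
              Fintype.sum_bijective _ hr _ _ (fun s => rfl)
            have h2 : (∑ s : Fin n, (f s).2) = ∑ x : Fin n, x :=
              Fintype.sum_bijective _ hc _ _ (fun s => rfl)
            rw [hS, h1, h2]
  have hS0 : S = 0 := by
    have h := add_left_cancel (a := S) (b := 0) (c := S) (by rw [add_zero, ← hsum])
    exact h.symm
  -- but S ≠ 0 for even n
  obtain ⟨k, hk⟩ := hev
  have hkpos : 0 < k := by omega
  open Fin.CommRing in
  have hSval : S = ((∑ i ∈ Finset.range n, i : ℕ) : Fin n) := by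
    rw [hS, Nat.cast_sum]
    rw [Finset.sum_range fun i => (i : Fin n)]
    exact Finset.sum_congr rfl fun x _ => (Fin.cast_val_eq_self x).symm
  open Fin.CommRing in
  rw [hSval, Fin.natCast_eq_zero] at hS0
  rw [Finset.sum_range_id] at hS0
  have hdvd : n ∣ k * (2 * k - 1) := by
    have : n * (n - 1) / 2 = k * (2 * k - 1) := by
      subst hk
      have : k + k = 2 * k := by ring
      rw [this]
      rcases Nat.eq_zero_or_pos k with h | h
      · omega
      · have : 2 * k * (2 * k - 1) = 2 * (k * (2 * k - 1)) := by ring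
        omega
    rwa [this] at hS0
  obtain ⟨c, hc2⟩ := hdvd
  subst hk
  have hm : k * (2 * k - 1) + k = k * (2 * k) := by
    have h1 : (2 * k - 1) + 1 = 2 * k := by omega
    calc k * (2 * k - 1) + k = k * ((2 * k - 1) + 1) := by ring
      _ = k * (2 * k) := by rw [h1]
  have heq : k * (2 * c + 1) = k * (2 * k) := by
    rw [← hm, hc2]; ring
  have := Nat.eq_of_mul_eq_mul_left hkpos heq
  omega
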